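/- arXiv:2105.10861 — 2 statements merged into one kernel-verified Lean document; each statement's English description precedes it below -/
import Mathlib

section
/- Let m ≥ 1 and let T₁ and T₂ be discourse trees over m EDUs. If S_edu(T₁) = S_edu(T₂), then T₁ = T₂. In other words, the map sending a discourse tree to its splitting-decision set is injective, so predicting the set of splitting decisions is equivalent to predicting the discourse tree. -/
/-- A discourse tree over the EDU interval `(i, j)`: a full binary tree whose
nodes are labeled by intervals, leaves are labeled `(i, i+1)`, and every
internal node labeled `(i, j)` has two children labeled `(i, k)` and `(k, j)`
for some `i < k < j`.  A discourse tree over `m` EDUs is a `DTree 0 m`. -/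
inductive DTree : ℕ → ℕ → Type
  | leaf (i : ℕ) : DTree i (i + 1)
  | node {i k j : ℕ} : DTree i k → DTree k j → DTree i j

/-- The splitting-decision set `S_edu(T)`: the set of triples `(i, k, j)` such
that some internal node of `T` labeled `(i, j)` has children labeled `(i, k)`
and `(k, j)`. -/
def DTree.splits : {i j : ℕ} → DTree i j → Finset (ℕ × ℕ × ℕ)
  | _, _, DTree.leaf _ => ∅
  | _, _, @DTree.node i k j l r => insert (i, k, j) (l.splits ∪ r.splits)

lemma DTree.lt : ∀ {i j : ℕ}, DTree i j → i < j
  | _, _, DTree.leaf _ => Nat.lt_succ_self _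
  | _, _, DTree.node l r => lt_trans l.lt r.lt

lemma DTree.splits_mem : ∀ {i j : ℕ} (T : DTree i j) {a b c : ℕ},
    (a, b, c) ∈ T.splits → i ≤ a ∧ a < b ∧ b < c ∧ c ≤ j := by
  intro i j T
  induction T with
  | leaf i => intro a b c hm; simp [DTree.splits] at hm
  | node l r ihl ihr =>
    intro a b c hm
    have hlk := l.lt
    have hkj := r.lt
    simp only [DTree.splits, Finset.mem_insert, Finset.mem_union] at hm
    rcases hm with h | h | h
    · injection h with h1 h2; injection h2 with h2 h3
      subst h1 h2 h3; omega
    · have := ihl h; omega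
    · have := ihr h; omega

lemma DTree.left_subset {i k j : ℕ} (l l' : DTree i k) (r r' : DTree k j)
    (h : (DTree.node l r).splits = (DTree.node l' r').splits) :
    l.splits ⊆ l'.splits := by
  intro t ht
  obtain ⟨a, b, c⟩ := t
  have hb := l.splits_mem ht
  have hkj := r.lt
  have : (a, b, c) ∈ (DTree.node l' r').splits := by
    rw [← h]; simp [DTree.splits, ht]
  simp only [DTree.splits, Finset.mem_insert, Finset.mem_union] at this
  rcases this with h' | h' | h'
  · exfalso
    have : c = j := by simpa using congrArg (fun t => t.2.2) h'
    omega
  · exact h'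
  · exfalso
    have := r'.splits_mem h'
    omega

lemma DTree.right_subset {i k j : ℕ} (l l' : DTree i k) (r r' : DTree k j)
    (h : (DTree.node l r).splits = (DTree.node l' r').splits) :
    r.splits ⊆ r'.splits := by
  intro t ht
  obtain ⟨a, b, c⟩ := t
  have hb := r.splits_mem ht
  have hik := l.lt
  have : (a, b, c) ∈ (DTree.node l' r').splits := by
    rw [← h]; simp [DTree.splits, ht]
  simp only [DTree.splits, Finset.mem_insert, Finset.mem_union] at this
  rcases this with h' | h' | h'
  · exfalso
    have : a = i := by simpa using congrArg (fun t => t.1) h'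
    omega
  · exfalso
    have := l'.splits_mem h'
    omega
  · exact h'

lemma DTree.splits_inj : ∀ {i j : ℕ} (T₁ T₂ : DTree i j),
    T₁.splits = T₂.splits → T₁ = T₂ := by
  intro i j T₁
  induction T₁ with
  | leaf i =>
    intro T₂ h
    cases T₂ with
    | leaf => rfl
    | node l r =>
      have h1 := l.lt
      have h2 := r.lt
      omega
  | node l r ihl ihr =>
    intro T₂ h
    rename_i i k j
    cases T₂ with
    | leaf =>
      have h1 := l.lt
      have h2 := r.lt
      omega
    | node l₂ r₂ =>
      rename_i k₂
      have hkk : k = k₂ := by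
        have hmem : (i, k, j) ∈ (DTree.node l₂ r₂).splits := by
          rw [← h]; simp [DTree.splits]
        simp only [DTree.splits, Finset.mem_insert, Finset.mem_union] at hmem
        have hlk := l.lt
        have hkj := r.lt
        have hlk₂ := l₂.lt
        have hkj₂ := r₂.lt
        rcases hmem with h' | h' | h'
        · have : k = k₂ := by simpa using congrArg (fun t => t.2.1) h'
          exact this
        · have := l₂.splits_mem h'; omega
        · have := r₂.splits_mem h'; omega
      subst hkk
      have hl : l.splits = l₂.splits :=
        Finset.Subset.antisymm (DTree.left_subset l l₂ r r₂ h)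
          (DTree.left_subset l₂ l r₂ r h.symm)
      have hr : r.splits = r₂.splits :=
        Finset.Subset.antisymm (DTree.right_subset l l₂ r r₂ h)
          (DTree.right_subset l₂ l r₂ r h.symm)
      rw [ihl l₂ hl, ihr r₂ hr]

/-- If two discourse trees over `m` EDUs (`m ≥ 1`) have the same
splitting-decision set, they are equal: the map `T ↦ S_edu(T)` is injective. -/
theorem splits_injective (m : ℕ) (hm : 1 ≤ m) (T₁ T₂ : DTree 0 m)
    (h : T₁.splits = T₂.splits) : T₁ = T₂ := by
  exact DTree.splits_inj T₁ T₂ h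
end

section
/- Let n ≥ 1. If T₁ (with EDU segmentation B₁) and T₂ (with EDU segmentation B₂) are binarized discourse trees over the span (0,n) and S(T₁) = S(T₂), then B₁ = B₂ and T₁ = T₂. In particular, the EDU segmentation is recoverable from the end-to-end splitting-decision set as the set of spans (i,j) with (i,j,j) ∈ S(T), so the end-to-end splitting-decision set determines both the segmentation and the tree. -/
/-- A binarized discourse tree over the token-boundary span `(i, j)`:
a full binary tree whose nodes are labeled by intervals, whose leaves (the
EDUs) are labeled by arbitrary intervals `(i, j)` with `i < j`, and every
internal node labeled `(i, j)` has two children labeled `(i, k)` and `(k, j)`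
for some `i < k < j`.  A binarized discourse tree over a document of `n`
tokens is an `ETree 0 n`; its EDU segmentation `B` is determined by its
leaves, which, read left to right, are automatically consecutive spans
`(b₀,b₁), (b₁,b₂), …, (b_{m−1},b_m)` with `b₀ = 0` and `b_m = n`. -/
inductive ETree : ℕ → ℕ → Type
  | leaf {i j : ℕ} (h : i < j) : ETree i j
  | node {i k j : ℕ} : ETree i k → ETree k j → ETree i j

/-- The end-to-end splitting-decision set `S(T)`: triples `(i, k, j)` for each
internal node labeled `(i, j)` with children `(i, k)` and `(k, j)`, together
with the EDU-marking decisions `(i, j, j)` for each leaf `(i, j)`. -/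
def ETree.splits : {i j : ℕ} → ETree i j → Finset (ℕ × ℕ × ℕ)
  | _, _, @ETree.leaf i j _ => {(i, j, j)}
  | _, _, @ETree.node i k j l r => insert (i, k, j) (l.splits ∪ r.splits)

/-- The EDU segmentation of the tree: the list of its leaf spans, read left to
right. -/
def ETree.edus : {i j : ℕ} → ETree i j → List (ℕ × ℕ)
  | _, _, @ETree.leaf i j _ => [(i, j)]
  | _, _, ETree.node l r => l.edus ++ r.edus

lemma ETree.span_lt : ∀ {i j : ℕ}, ETree i j → i < j
  | _, _, .leaf h => h
  | _, _, .node l r => lt_trans l.span_lt r.span_lt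

lemma ETree.splits_bounds : ∀ {i j : ℕ} (T : ETree i j) (t : ℕ × ℕ × ℕ),
    t ∈ T.splits → i ≤ t.1 ∧ t.1 < t.2.1 ∧ t.2.1 ≤ t.2.2 ∧ t.2.2 ≤ j := by
  intro i j T
  induction T with
  | leaf h =>
    intro t ht
    simp only [ETree.splits, Finset.mem_singleton] at ht
    subst ht
    exact ⟨le_refl _, h, le_refl _, le_refl _⟩
  | @node i k j l r ihl ihr =>
    intro t ht
    simp only [ETree.splits, Finset.mem_insert, Finset.mem_union] at ht
    rcases ht with rfl | ht | ht
    · exact ⟨le_refl _, l.span_lt, le_of_lt r.span_lt, le_refl _⟩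
    · obtain ⟨h1, h2, h3, h4⟩ := ihl t ht
      exact ⟨h1, h2, h3, le_trans h4 (le_of_lt r.span_lt)⟩
    · obtain ⟨h1, h2, h3, h4⟩ := ihr t ht
      exact ⟨le_trans (le_of_lt l.span_lt) h1, h2, h3, h4⟩

lemma ETree.top_not_mem_sub {i k j : ℕ} (l : ETree i k) (r : ETree k j) :
    (i, k, j) ∉ l.splits ∪ r.splits := by
  intro hmem
  rcases Finset.mem_union.mp hmem with hm | hm
  · have := (l.splits_bounds _ hm).2.2.2
    exact absurd this (not_le.mpr r.span_lt)
  · have := (r.splits_bounds _ hm).1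
    exact absurd this (not_le.mpr l.span_lt)

lemma ETree.top_mem {i k j : ℕ} (l : ETree i k) (r : ETree k j) :
    (i, k, j) ∈ (ETree.node l r).splits := Finset.mem_insert_self _ _

lemma ETree.splits_injective : ∀ {i j : ℕ} (T₁ T₂ : ETree i j),
    T₁.splits = T₂.splits → T₁ = T₂ := by
  intro i j T₁
  induction T₁ with
  | leaf h =>
    intro T₂ hs
    cases T₂ with
    | leaf h' => rfl
    | @node _ k _ l r =>
      exfalso
      have := ETree.top_mem l r
      rw [← hs] at this
      simp only [ETree.splits, Finset.mem_singleton, Prod.mk.injEq] at this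
      exact absurd this.2.1 (ne_of_lt r.span_lt)
  | @node i k j l₁ r₁ ihl ihr =>
    intro T₂ hs
    cases T₂ with
    | leaf h' =>
      exfalso
      have := ETree.top_mem l₁ r₁
      rw [hs] at this
      simp only [ETree.splits, Finset.mem_singleton, Prod.mk.injEq] at this
      exact absurd this.2.1 (ne_of_lt r₁.span_lt)
    | @node _ k₂ _ l₂ r₂ =>
      -- first, k = k₂
      have hk : k = k₂ := by
        have hmem := ETree.top_mem l₁ r₁
        rw [hs] at hmem
        simp only [ETree.splits, Finset.mem_insert, Finset.mem_union,
          Prod.mk.injEq] at hmem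
        rcases hmem with ⟨_, h2, _⟩ | hm | hm
        · exact h2
        · exact absurd (l₂.splits_bounds _ hm).2.2.2 (not_le.mpr r₂.span_lt)
        · exact absurd (r₂.splits_bounds _ hm).1 (not_le.mpr l₂.span_lt)
      subst hk
      -- remove the top triple
      have hU : l₁.splits ∪ r₁.splits = l₂.splits ∪ r₂.splits := by
        have h1 := Finset.erase_insert (ETree.top_not_mem_sub l₁ r₁)
        have h2 := Finset.erase_insert (ETree.top_not_mem_sub l₂ r₂)
        simp only [ETree.splits] at hs
        rw [← h1, ← h2, hs]
      have hfl : ∀ (l : ETree i k) (r : ETree k j),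
          l.splits = (l.splits ∪ r.splits).filter (fun t => t.2.2 ≤ k) := by
        intro l r
        ext t
        simp only [Finset.mem_filter, Finset.mem_union]
        constructor
        · intro ht
          exact ⟨Or.inl ht, (l.splits_bounds _ ht).2.2.2⟩
        · rintro ⟨hm | hm, hle⟩
          · exact hm
          · exfalso
            obtain ⟨h1, h2, h3, _⟩ := r.splits_bounds _ hm
            omega
      have hfr : ∀ (l : ETree i k) (r : ETree k j),
          r.splits = (l.splits ∪ r.splits).filter (fun t => k ≤ t.1) := by
        intro l r
        ext t
        simp only [Finset.mem_filter, Finset.mem_union]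
        constructor
        · intro ht
          exact ⟨Or.inr ht, (r.splits_bounds _ ht).1⟩
        · rintro ⟨hm | hm, hle⟩
          · exfalso
            obtain ⟨h1, h2, h3, h4⟩ := l.splits_bounds _ hm
            omega
          · exact hm
      have hl : l₁.splits = l₂.splits := by rw [hfl l₁ r₁, hfl l₂ r₂, hU]
      have hr : r₁.splits = r₂.splits := by rw [hfr l₁ r₁, hfr l₂ r₂, hU]
      rw [ihl l₂ hl, ihr r₂ hr]

lemma ETree.mem_edus_iff : ∀ {a b : ℕ} (T : ETree a b) (i j : ℕ),
    (i, j) ∈ T.edus ↔ (i, j, j) ∈ T.splits := by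
  intro a b T
  induction T with
  | leaf h =>
    intro i j
    simp [ETree.edus, ETree.splits, Prod.ext_iff, and_assoc]
  | @node a k b l r ihl ihr =>
    intro i j
    simp only [ETree.edus, List.mem_append, ETree.splits, Finset.mem_insert,
      Finset.mem_union, ihl, ihr, Prod.mk.injEq]
    constructor
    · rintro (hm | hm)
      · exact Or.inr (Or.inl hm)
      · exact Or.inr (Or.inr hm)
    · rintro (⟨rfl, h2, h3⟩ | hm | hm)
      · exact absurd (h2.symm.trans h3) (ne_of_lt r.span_lt)
      · exact Or.inl hm
      · exact Or.inr hm

/-- If two binarized discourse trees over `(0, n)` (`n ≥ 1`) have the same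
end-to-end splitting-decision set, then they have the same EDU segmentation
and are equal.  In particular, the segmentation is recoverable from `S(T)` as
the set of spans `(i, j)` with `(i, j, j) ∈ S(T)`. -/
theorem end_to_end_splits_determine_tree (n : ℕ) (hn : 1 ≤ n)
    (T₁ T₂ : ETree 0 n) (h : T₁.splits = T₂.splits) :
    T₁.edus = T₂.edus ∧ T₁ = T₂ ∧
      ∀ i j : ℕ, (i, j) ∈ T₁.edus ↔ (i, j, j) ∈ T₁.splits := by
  have heq := ETree.splits_injective T₁ T₂ h
  subst heq
  exact ⟨rfl, rfl, fun i j => ETree.mem_edus_iff T₁ i j⟩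
end
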